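/- Let Γ be the segment in ℝ² joining distinct points A and B, with line coefficients a, b, c, length L and midpoint O=(x_O,y_O). Given real numbers W₁, W_x, W_y satisfying the consistency condition a·W_x + b·W_y + c·W₁ = 0, the affine traction F(s) = F₀ + s·F₁ with coefficients F₀ = W₁/L and F₁ = (12/L³)·( a·W_y − b·W_x − (a·y_O − b·x_O)·W₁ ) has works W(1)=W₁, W(x)=W_x and W(y)=W_y. -/

import Mathlib

lemma quad_integral (p q r : ℝ) :
    (∫ s in (-(1:ℝ)/2)..(1/2), (p + q * s + r * s ^ 2)) = p + r / 12 := by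
  have h1 : (∫ s in (-(1:ℝ)/2)..(1/2), (p + q * s + r * s ^ 2)) =
      (∫ s in (-(1:ℝ)/2)..(1/2), (p : ℝ)) + (∫ s in (-(1:ℝ)/2)..(1/2), q * s)
        + (∫ s in (-(1:ℝ)/2)..(1/2), r * s ^ 2) := by
    rw [intervalIntegral.integral_add, intervalIntegral.integral_add]
    · exact (continuous_const).intervalIntegrable _ _
    · exact (continuous_const.mul continuous_id).intervalIntegrable _ _
    · exact ((continuous_const).add (continuous_const.mul continuous_id)).intervalIntegrable _ _
    · exact (continuous_const.mul (continuous_pow 2)).intervalIntegrable _ _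
  simp only [h1, intervalIntegral.integral_const, intervalIntegral.integral_const_mul,
    integral_id, integral_pow]
  norm_num
  rw [intervalIntegral.integral_const_mul, integral_id]
  ring

/-- On the segment Γ joining distinct points A and B, with line
coefficients a, b, c, length L and midpoint O = (xO, yO), if the given works
W₁, Wx, Wy satisfy the consistency condition a·Wx + b·Wy + c·W₁ = 0, then the
affine traction F(s) = F₀ + s·F₁ with F₀ = W₁/L and
F₁ = (12/L³)·(a·Wy − b·Wx − (a·yO − b·xO)·W₁) has works W(1) = W₁, W(x) = Wx
and W(y) = Wy. -/
theorem affine_traction_formula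
    (xA yA xB yB : ℝ) (hAB : (xA, yA) ≠ (xB, yB))
    (a b c L xO yO : ℝ)
    (ha : a = yB - yA) (hb : b = xA - xB) (hc : c = xB * yA - yB * xA)
    (hL : L = Real.sqrt ((xB - xA) ^ 2 + (yB - yA) ^ 2))
    (hxO : xO = (xA + xB) / 2) (hyO : yO = (yA + yB) / 2)
    (W₁ Wx Wy : ℝ)
    (hcons : a * Wx + b * Wy + c * W₁ = 0)
    (F₀ F₁ : ℝ)
    (hF₀ : F₀ = W₁ / L)
    (hF₁ : F₁ = 12 / L ^ 3 * (a * Wy - b * Wx - (a * yO - b * xO) * W₁)) :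
    (L * ∫ s in (-(1:ℝ)/2)..(1/2), (F₀ + s * F₁)) = W₁ ∧
    (L * ∫ s in (-(1:ℝ)/2)..(1/2), (F₀ + s * F₁) * (xO - s * b)) = Wx ∧
    (L * ∫ s in (-(1:ℝ)/2)..(1/2), (F₀ + s * F₁) * (yO + s * a)) = Wy := by
  have hpos : (0:ℝ) < (xB - xA) ^ 2 + (yB - yA) ^ 2 := by
    rcases (Prod.mk.injEq .. ▸ hAB : ¬(xA = xB ∧ yA = yB)) with h
    by_contra hle
    push_neg at hle
    have hx : (xB - xA) ^ 2 = 0 ∧ (yB - yA) ^ 2 = 0 := by constructor <;> nlinarith [sq_nonneg (xB - xA), sq_nonneg (yB - yA)]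
    exact h ⟨by nlinarith [hx.1], by nlinarith [hx.2]⟩
  have hLpos : 0 < L := hL ▸ Real.sqrt_pos.mpr hpos
  have hLne : L ≠ 0 := ne_of_gt hLpos
  have hL2 : L ^ 2 = a ^ 2 + b ^ 2 := by
    rw [hL, Real.sq_sqrt hpos.le, ha, hb]; ring
  have i1 : (∫ s in (-(1:ℝ)/2)..(1/2), (F₀ + s * F₁)) = F₀ := by
    exact (intervalIntegral.integral_congr
      (g := fun s => F₀ + F₁ * s + (0:ℝ) * s ^ 2)
      (fun s _ => by ring)).trans ((quad_integral _ _ _).trans (by ring))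
  have i2 : (∫ s in (-(1:ℝ)/2)..(1/2), (F₀ + s * F₁) * (xO - s * b))
      = F₀ * xO - F₁ * b / 12 := by
    exact (intervalIntegral.integral_congr
      (g := fun s => F₀ * xO + (F₁ * xO - F₀ * b) * s + (-(F₁ * b)) * s ^ 2)
      (fun s _ => by ring)).trans ((quad_integral _ _ _).trans (by ring))
  have i3 : (∫ s in (-(1:ℝ)/2)..(1/2), (F₀ + s * F₁) * (yO + s * a))
      = F₀ * yO + F₁ * a / 12 := by
    exact (intervalIntegral.integral_congr
      (g := fun s => F₀ * yO + (F₁ * yO + F₀ * a) * s + (F₁ * a) * s ^ 2)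
      (fun s _ => by ring)).trans ((quad_integral _ _ _).trans (by ring))
  have hcO : c = -(a * xO + b * yO) := by rw [hc, ha, hb, hxO, hyO]; ring
  subst hcO
  refine ⟨?_, ?_, ?_⟩
  · rw [i1, hF₀]; field_simp
  · rw [i2, hF₀, hF₁]
    field_simp
    linear_combination (W₁ * xO - Wx) * hL2 - a * hcons
  · rw [i3, hF₀, hF₁]
    field_simp
    linear_combination (W₁ * yO - Wy) * hL2 - b * hcons
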